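/- Let H be a separable Hilbert space with orthonormal basis {e_j}_{j≥1} ∪ {f_j}_{j≥1}. Let H_N = span{e_j : j ≥ 1} ⊕ span{f_1,…,f_N} (closed). Let U(2∞) = ⋃_{n} U(span{e_1,…,e_n,f_1,…,f_n}) (each extended by the identity on the orthogonal complement), and let 𝒰 = ⋃_N U(H_N) (extended by identity). Then U(2∞) is dense in 𝒰 in the strong operator topology: for every W ∈ 𝒰, vectors ξ_1,…,ξ_k ∈ H, and ε > 0, there exists W' ∈ U(2∞) with ‖Wξ_j − W'ξ_j‖ < ε for all j. -/

import Mathlib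

set_option linter.unusedSectionVars false
set_option maxHeartbeats 1000000

noncomputable section
open Submodule

namespace TwoInfty

variable {H : Type*} [NormedAddCommGroup H] [InnerProductSpace ℂ H]

local notation "⟪" x ", " y "⟫" => @inner ℂ _ _ x y

section GS


lemma orthonormal_snoc {m : ℕ} {u : Fin m → H} (hu : Orthonormal ℂ u) {w : H}
    (hw : ‖w‖ = 1) (hwo : ∀ i, ⟪u i, w⟫ = 0) :
    Orthonormal ℂ (Fin.snoc u w : Fin (m + 1) → H) := by
  rw [orthonormal_iff_ite]
  intro i j
  induction i using Fin.lastCases with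
  | last =>
    induction j using Fin.lastCases with
    | last => simp [inner_self_eq_norm_sq_to_K, hw]
    | cast j =>
      have : ⟪w, u j⟫ = 0 := by rw [← inner_conj_symm, hwo j, map_zero]
      simp [this, Fin.ne_of_gt, (Fin.castSucc_lt_last j)]
  | cast i =>
    induction j using Fin.lastCases with
    | last => simp [hwo i, Fin.ne_of_lt, (Fin.castSucc_lt_last i)]
    | cast j =>
      have := (orthonormal_iff_ite.mp hu) i j
      simpa [Fin.castSucc_inj] using this

/-- Gram–Schmidt-type perturbation: an orthonormal family that is approximated
by vectors of a subspace `F` can be approximated by an orthonormal family inside `F`. -/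
lemma gs_perturb (m : ℕ) : ∀ ε : ℝ, 0 < ε → ∃ δ : ℝ, 0 < δ ∧
    ∀ (F : Submodule ℂ H) (x y : Fin m → H), Orthonormal ℂ x → (∀ i, y i ∈ F) →
      (∀ i, ‖x i - y i‖ < δ) →
      ∃ u : Fin m → H, Orthonormal ℂ u ∧ (∀ i, u i ∈ F) ∧ ∀ i, ‖x i - u i‖ < ε := by
  induction m with
  | zero =>
      intro ε hε
      exact ⟨ε, hε, fun F x y _ _ _ => ⟨x, ⟨fun i => i.elim0, fun i => i.elim0⟩,
        fun i => i.elim0, fun i => i.elim0⟩⟩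
  | succ m ih =>
      intro ε hε
      set ε₁ : ℝ := min ε 1 with hε₁
      have hε₁pos : 0 < ε₁ := lt_min hε one_pos
      have hε₁le1 : ε₁ ≤ 1 := min_le_right _ _
      have hε₁leε : ε₁ ≤ ε := min_le_left _ _
      set ε' : ℝ := ε₁ / (16 * (m + 1)) with hε'
      have h16 : (0:ℝ) < 16 * ((m:ℝ) + 1) := by positivity
      have hε'pos : 0 < ε' := by positivity
      have hε'le1 : ε' ≤ 1 := by
        rw [hε', div_le_one h16]
        nlinarith
      have hε'leε₁ : ε' ≤ ε₁ := by
        rw [hε', div_le_iff₀ h16]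
        nlinarith [hε₁pos.le]
      obtain ⟨δ', hδ'pos, hδ'⟩ := ih ε' hε'pos
      refine ⟨min δ' ε', lt_min hδ'pos hε'pos, ?_⟩
      intro F x y hx hyF hxy
      obtain ⟨u', hu'on, hu'F, hu'x⟩ := hδ' F (x ∘ Fin.castSucc) (y ∘ Fin.castSucc)
        (hx.comp _ (Fin.castSucc_injective m))
        (fun i => hyF _) (fun i => lt_of_lt_of_le (hxy _) (min_le_left _ _))
      set xl := x (Fin.last m) with hxldef
      set yl := y (Fin.last m) with hyldef
      have hxl : ‖xl‖ = 1 := hx.1 _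
      have hxyl : ‖xl - yl‖ < ε' := lt_of_lt_of_le (hxy _) (min_le_right _ _)
      have hyln : ‖yl‖ ≤ 1 + ε' := by
        have h1 := norm_sub_norm_le yl xl
        have h2 : ‖yl - xl‖ = ‖xl - yl‖ := norm_sub_rev _ _
        nlinarith
      set z := yl - ∑ i : Fin m, ⟪u' i, yl⟫ • u' i with hz
      have hzF : z ∈ F :=
        sub_mem (hyF _) (Submodule.sum_mem _ (fun i _ => Submodule.smul_mem _ _ (hu'F i)))
      have hzperp : ∀ i, ⟪u' i, z⟫ = 0 := by
        intro i
        rw [hz, inner_sub_right, inner_sum]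
        rw [Finset.sum_eq_single i]
        · rw [inner_smul_right, (orthonormal_iff_ite.mp hu'on) i i]
          simp
        · intro j _ hji
          rw [inner_smul_right, (orthonormal_iff_ite.mp hu'on) i j, if_neg (Ne.symm hji)]
          simp
        · simp
      -- coefficient estimates
      have hcoef : ∀ i : Fin m, ‖⟪u' i, yl⟫‖ ≤ 3 * ε' := by
        intro i
        have e1 : ⟪u' i, yl⟫ = ⟪u' i - x (Fin.castSucc i), yl⟫ + ⟪x (Fin.castSucc i), yl - xl⟫
            + ⟪x (Fin.castSucc i), xl⟫ := by
          rw [inner_sub_left, inner_sub_right]; ring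
        have e2 : ⟪x (Fin.castSucc i), xl⟫ = 0 :=
          hx.2 (fun h => absurd (congrArg Fin.val h) (by simp [Fin.last]; omega))
        have b1 : ‖⟪u' i - x (Fin.castSucc i), yl⟫‖ ≤ ε' * (1 + ε') := by
          calc ‖⟪u' i - x (Fin.castSucc i), yl⟫‖ ≤ ‖u' i - x (Fin.castSucc i)‖ * ‖yl‖ :=
                norm_inner_le_norm _ _
            _ ≤ ε' * (1 + ε') := by
                have := hu'x i
                simp only [Function.comp_apply] at this
                rw [norm_sub_rev] at this
                have h0 : (0:ℝ) ≤ ‖yl‖ := norm_nonneg _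
                nlinarith [norm_nonneg (u' i - x (Fin.castSucc i))]
        have b2 : ‖⟪x (Fin.castSucc i), yl - xl⟫‖ ≤ ε' := by
          calc ‖⟪x (Fin.castSucc i), yl - xl⟫‖ ≤ ‖x (Fin.castSucc i)‖ * ‖yl - xl‖ :=
                norm_inner_le_norm _ _
            _ ≤ ε' := by
                rw [hx.1, one_mul, norm_sub_rev]
                exact le_of_lt hxyl
        calc ‖⟪u' i, yl⟫‖ ≤ ‖⟪u' i - x (Fin.castSucc i), yl⟫‖ + ‖⟪x (Fin.castSucc i), yl - xl⟫‖
              + ‖⟪x (Fin.castSucc i), xl⟫‖ := by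
              rw [e1]; exact norm_add₃_le
          _ ≤ ε' * (1 + ε') + ε' + 0 := by
              rw [e2, norm_zero]
              exact add_le_add (add_le_add b1 b2) le_rfl
          _ ≤ 3 * ε' := by nlinarith [hε'pos.le, hε'le1]
      -- distance from z to xl
      have hρ : ‖xl - z‖ ≤ ε' + m * (3 * ε') := by
        have : xl - z = (xl - yl) + ∑ i : Fin m, ⟪u' i, yl⟫ • u' i := by
          rw [hz]; abel
        rw [this]
        calc ‖(xl - yl) + ∑ i : Fin m, ⟪u' i, yl⟫ • u' i‖
            ≤ ‖xl - yl‖ + ‖∑ i : Fin m, ⟪u' i, yl⟫ • u' i‖ := norm_add_le _ _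
          _ ≤ ε' + m * (3 * ε') := by
              refine add_le_add hxyl.le ?_
              calc ‖∑ i : Fin m, ⟪u' i, yl⟫ • u' i‖ ≤ ∑ i : Fin m, ‖⟪u' i, yl⟫ • u' i‖ :=
                    norm_sum_le _ _
                _ ≤ ∑ _i : Fin m, 3 * ε' := by
                    refine Finset.sum_le_sum (fun i _ => ?_)
                    rw [norm_smul, hu'on.1 i, mul_one]
                    exact hcoef i
                _ = m * (3 * ε') := by simp [Finset.sum_const, mul_comm]
      have hρ' : ‖xl - z‖ ≤ ε₁ / 4 := by
        refine hρ.trans ?_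
        have heq : ε' + (m : ℝ) * (3 * ε') = ε₁ * (1 + 3 * m) / (16 * (m + 1)) := by
          rw [hε']; ring
        rw [heq, div_le_div_iff₀ h16 (by norm_num : (0:ℝ) < 4)]
        nlinarith [hε₁pos.le, (Nat.cast_nonneg m : (0:ℝ) ≤ (m:ℝ))]
      -- norm of z
      have hzn_lb : (3:ℝ)/4 ≤ ‖z‖ := by
        have h1 := norm_sub_norm_le xl z
        rw [hxl] at h1
        nlinarith [hε₁le1]
      have hznpos : (0:ℝ) < ‖z‖ := by nlinarith
      set w : H := ((‖z‖⁻¹ : ℝ) : ℂ) • z with hw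
      have hwn : ‖w‖ = 1 := by
        rw [hw, norm_smul, Complex.norm_real, Real.norm_eq_abs]
        rw [abs_of_pos (inv_pos.2 hznpos)]
        exact inv_mul_cancel₀ (ne_of_gt hznpos)
      have hwperp : ∀ i, ⟪u' i, w⟫ = 0 := by
        intro i
        rw [hw, inner_smul_right, hzperp i, mul_zero]
      have hwF : w ∈ F := Submodule.smul_mem _ _ hzF
      have hzw : ‖z - w‖ ≤ ε₁ / 4 := by
        have he : z - w = (((1 : ℝ) - ‖z‖⁻¹ : ℝ) : ℂ) • z := by
          rw [hw]
          push_cast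
          rw [sub_smul, one_smul]
        rw [he, norm_smul, Complex.norm_real, Real.norm_eq_abs]
        have h2 : |1 - ‖z‖⁻¹| * ‖z‖ = |‖z‖ - 1| := by
          rw [← abs_of_pos hznpos, ← abs_mul, abs_of_pos hznpos,
            sub_mul, one_mul, inv_mul_cancel₀ (ne_of_gt hznpos)]
        rw [h2, abs_sub_le_iff]
        have hzx : ‖z - xl‖ = ‖xl - z‖ := norm_sub_rev _ _
        have ha := norm_sub_norm_le z xl
        have hb := norm_sub_norm_le xl z
        rw [hxl] at ha hb
        constructor
        · linarith
        · linarith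
      have hxw : ‖xl - w‖ < ε := by
        calc ‖xl - w‖ ≤ ‖xl - z‖ + ‖z - w‖ := by
              have : xl - w = (xl - z) + (z - w) := by abel
              rw [this]; exact norm_add_le _ _
          _ ≤ ε₁ / 4 + ε₁ / 4 := add_le_add hρ' hzw
          _ < ε := by nlinarith
      refine ⟨Fin.snoc u' w, orthonormal_snoc hu'on hwn hwperp, ?_, ?_⟩
      · intro i
        induction i using Fin.lastCases with
        | last => simpa using hwF
        | cast i => simpa using hu'F i
      · intro i
        induction i using Fin.lastCases with
        | last => simpa using hxw
        | cast i =>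
          simp only [Fin.snoc_castSucc]
          have := hu'x i
          simp only [Function.comp_apply] at this
          exact this.trans_le (hε'leε₁.trans hε₁leε)


end GS

section Span
variable {ι : Type*} [DecidableEq ι]


lemma mem_span_image_finset {b : ι → H} {v : H} (hv : v ∈ span ℂ (Set.range b)) :
    ∃ s : Finset ι, v ∈ span ℂ (b '' ↑s) := by
  obtain ⟨T, hTsub, hvT⟩ := Submodule.mem_span_finite_of_mem_span hv
  choose g hg using fun (x : T) => hTsub x.2
  refine ⟨T.attach.image g, span_le.2 ?_ hvT⟩
  intro x hx
  refine SetLike.mem_coe.2 (subset_span ?_)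
  exact ⟨g ⟨x, hx⟩, by simp, hg ⟨x, hx⟩⟩

lemma approx_total {b : ι → H}
    (htotal : (span ℂ (Set.range b)).topologicalClosure = ⊤) (x : H) {ε : ℝ} (hε : 0 < ε) :
    ∃ (s : Finset ι) (v : H), v ∈ span ℂ (b '' ↑s) ∧ ‖x - v‖ < ε := by
  have hx : x ∈ (span ℂ (Set.range b)).topologicalClosure := htotal ▸ Submodule.mem_top
  have hx' : x ∈ closure ((span ℂ (Set.range b) : Set H)) := hx
  obtain ⟨v, hv, hvd⟩ := Metric.mem_closure_iff.1 hx' ε hε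
  obtain ⟨s, hs⟩ := mem_span_image_finset hv
  exact ⟨s, v, hs, by rwa [← dist_eq_norm]⟩

lemma span_repr {b : ι → H} (hb : Orthonormal ℂ b) {s : Finset ι} {v : H}
    (hv : v ∈ span ℂ (b '' ↑s)) : v = ∑ j ∈ s, ⟪b j, v⟫ • b j := by
  induction hv using Submodule.span_induction with
  | mem x hx =>
      obtain ⟨j0, hj0, rfl⟩ := hx
      rw [Finset.sum_congr rfl (fun j _ => by rw [orthonormal_iff_ite.mp hb j j0])]
      rw [Finset.sum_eq_single j0]
      · simp
      · intro j _ hjj0; rw [if_neg hjj0, zero_smul]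
      · intro h; exact absurd hj0 h
  | zero => simp
  | add x y hx hy ihx ihy =>
      conv_lhs => rw [ihx, ihy]
      rw [← Finset.sum_add_distrib]
      refine Finset.sum_congr rfl (fun j _ => ?_)
      rw [inner_add_right, add_smul]
  | smul c x hx ihx =>
      conv_lhs => rw [ihx]
      rw [Finset.smul_sum]
      refine Finset.sum_congr rfl (fun j _ => ?_)
      rw [inner_smul_right, smul_smul]

lemma basis_mem_orthogonal {b : ι → H} (hb : Orthonormal ℂ b) {t : Finset ι} {i : ι}
    (hi : i ∉ t) : b i ∈ (span ℂ (b '' ↑t))ᗮ := by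
  rw [Submodule.mem_orthogonal]
  intro u hu
  induction hu using Submodule.span_induction with
  | mem x hx =>
      obtain ⟨j, hj, rfl⟩ := hx
      exact hb.2 (fun h => hi (h ▸ hj))
  | zero => simp
  | add x y hx hy ihx ihy => rw [inner_add_left, ihx, ihy, add_zero]
  | smul c x hx ihx => rw [inner_smul_left, ihx, mul_zero]


lemma orthonormal_subtype {F : Submodule ℂ H} {κ : Type*} {v : κ → F}
    (h : Orthonormal ℂ (fun i => (v i : H))) : Orthonormal ℂ v := by
  classical
  rw [orthonormal_iff_ite] at h ⊢
  intro i j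
  have := h i j
  rwa [← Submodule.coe_inner] at this

end Span

section Ext
variable [CompleteSpace H]


variable (K : Submodule ℂ H) [FiniteDimensional ℂ K]

/-- extend `L : K ≃ₗᵢ K` to `H` by identity on `Kᗮ`, as a plain map. -/
def ext (L : K →L[ℂ] K) : H →L[ℂ] H :=
  K.subtypeL.comp (L.comp (orthogonalProjection K)) +
    (ContinuousLinearMap.id ℂ H - K.subtypeL.comp (orthogonalProjection K))

lemma ext_apply (L : K →L[ℂ] K) (x : H) :
    ext K L x = (L (orthogonalProjection K x) : H) + (x - orthogonalProjection K x) := rfl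

lemma ext_comp (L L' : K →L[ℂ] K) (h : ∀ y : K, L' (L y) = y) (x : H) :
    ext K L' (ext K L x) = x := by
  have hPa : orthogonalProjection K ((L (orthogonalProjection K x) : H)) =
      L (orthogonalProjection K x) :=
    orthogonalProjection_mem_subspace_eq_self _
  have hPb : orthogonalProjection K (x - orthogonalProjection K x) = 0 :=
    orthogonalProjection_mem_subspace_orthogonalComplement_eq_zero
      (Submodule.sub_starProjection_mem_orthogonal x)
  rw [ext_apply, ext_apply, map_add, hPa, hPb, add_zero, h]
  abel

lemma ext_norm (L : ↥K →L[ℂ] ↥K) (hL : ∀ y : K, ‖L y‖ = ‖y‖) (x : H) :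
    ‖ext K L x‖ = ‖x‖ := by
  set P := orthogonalProjection K
  have horth : ∀ y : K, ⟪(y : H), x - P x⟫ = 0 := fun y =>
    Submodule.inner_right_of_mem_orthogonal y.2 (Submodule.sub_starProjection_mem_orthogonal x)
  have h1 : ‖ext K L x‖ * ‖ext K L x‖
      = ‖(L (P x) : H)‖ * ‖(L (P x) : H)‖ + ‖x - P x‖ * ‖x - P x‖ := by
    rw [ext_apply]
    exact norm_add_sq_eq_norm_sq_add_norm_sq_of_inner_eq_zero _ _ (horth _)
  have h2 : ‖x‖ * ‖x‖ = ‖(P x : H)‖ * ‖(P x : H)‖ + ‖x - P x‖ * ‖x - P x‖ := by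
    have := norm_add_sq_eq_norm_sq_add_norm_sq_of_inner_eq_zero
      ((P x : H)) (x - P x) (horth _)
    simpa using this
  have h3 : ‖(L (P x) : H)‖ = ‖(P x : H)‖ := by
    simpa [Submodule.coe_norm] using hL (P x)
  have hsq : ‖ext K L x‖ * ‖ext K L x‖ = ‖x‖ * ‖x‖ := by rw [h1, h2, h3]
  nlinarith [norm_nonneg (ext K L x), norm_nonneg x, hsq]

/-- the extension as a linear isometry equivalence. -/
def extIso (L : K ≃ₗᵢ[ℂ] K) : H ≃ₗᵢ[ℂ] H where
  toLinearEquiv := LinearEquiv.ofLinear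
    (ext K L.toLinearIsometry.toContinuousLinearMap)
    (ext K L.symm.toLinearIsometry.toContinuousLinearMap)
    (by ext x; exact ext_comp K _ _ (fun y => L.apply_symm_apply y) x)
    (by ext x; exact ext_comp K _ _ (fun y => L.symm_apply_apply y) x)
  norm_map' x := ext_norm K _ (fun y => L.norm_map y) x

lemma extIso_apply (L : K ≃ₗᵢ[ℂ] K) (x : H) :
    extIso K L x = (L (orthogonalProjection K x) : H) + (x - orthogonalProjection K x) := rfl

lemma extIso_apply_of_mem (L : K ≃ₗᵢ[ℂ] K) {x : H} (hx : x ∈ K) :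
    extIso K L x = (L ⟨x, hx⟩ : H) := by
  have : orthogonalProjection K x = ⟨x, hx⟩ := by
    ext
    exact Submodule.starProjection_eq_self_iff.2 hx
  rw [extIso_apply, this]
  simp

lemma extIso_apply_of_mem_orthogonal (L : K ≃ₗᵢ[ℂ] K) {x : H} (hx : x ∈ Kᗮ) :
    extIso K L x = x := by
  have : orthogonalProjection K x = 0 :=
    orthogonalProjection_mem_subspace_orthogonalComplement_eq_zero hx
  rw [extIso_apply, this]
  simp

lemma extIso_mem_unitary (L : K ≃ₗᵢ[ℂ] K) :
    ((extIso K L : H ≃ₗᵢ[ℂ] H) : H →L[ℂ] H) ∈ unitary (H →L[ℂ] H) :=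
  ((Unitary.linearIsometryEquiv (𝕜 := ℂ) (H := H)).symm (extIso K L)).2

lemma extIso_coe_apply (L : K ≃ₗᵢ[ℂ] K) (x : H) :
    ((extIso K L : H ≃ₗᵢ[ℂ] H) : H →L[ℂ] H) x = extIso K L x := rfl


lemma unitary_approx_on_basis {ι : Type*} [DecidableEq ι] {b : ι → H}
    (hb : Orthonormal ℂ b)
    (htotal : (span ℂ (Set.range b)).topologicalClosure = ⊤)
    (W : H →L[ℂ] H) (hW : W ∈ unitary (H →L[ℂ] H))
    (s : Finset ι) {δ : ℝ} (hδ : 0 < δ) :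
    ∃ t : Finset ι, s ⊆ t ∧ ∃ W' ∈ unitary (H →L[ℂ] H),
      (∀ i, i ∉ t → W' (b i) = b i) ∧ ∀ j ∈ s, ‖W (b j) - W' (b j)‖ < δ := by
  classical
  set m := s.card with hm
  set eqv : {x // x ∈ s} ≃ Fin m := s.equivFin with heqv
  set x : Fin m → H := fun i => W (b ((eqv.symm i) : ι)) with hx
  have hWb : Orthonormal ℂ (fun i => W (b i)) := by
    rw [orthonormal_iff_ite] at hb ⊢
    intro i j
    rw [ContinuousLinearMap.inner_map_map_of_mem_unitary hW]
    exact hb i j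
  have hxon : Orthonormal ℂ x :=
    hWb.comp (fun i => ((eqv.symm i) : ι))
      (Subtype.val_injective.comp eqv.symm.injective)
  obtain ⟨δ', hδ'pos, hGS⟩ := gs_perturb (H := H) m δ hδ
  choose si w hwmem hwclose using fun i : Fin m => approx_total htotal (x i) hδ'pos
  set t : Finset ι := s ∪ Finset.univ.biUnion si with ht
  have hst : s ⊆ t := Finset.subset_union_left
  set F : Submodule ℂ H := span ℂ (b '' ↑t) with hF
  haveI : FiniteDimensional ℂ F :=
    FiniteDimensional.span_of_finite ℂ (t.finite_toSet.image b)
  have hwF : ∀ i, w i ∈ F := by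
    intro i
    refine span_mono (Set.image_mono (f := b) ?_) (hwmem i)
    intro a ha
    exact Finset.mem_coe.2 (Finset.mem_union_right _ (Finset.mem_biUnion.2 ⟨i, Finset.mem_univ _, ha⟩))
  obtain ⟨u, huon, huF, hux⟩ := hGS F x w hxon hwF hwclose
  -- families inside F
  have hbmem : ∀ i : Fin m, b ((eqv.symm i) : ι) ∈ F := by
    intro i
    exact subset_span ⟨_, Finset.mem_coe.2 (hst (eqv.symm i).2), rfl⟩
  set bE : Fin m → F := fun i => ⟨b ((eqv.symm i) : ι), hbmem i⟩ with hbE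
  set uE : Fin m → F := fun i => ⟨u i, huF i⟩ with huE
  have hbEon : Orthonormal ℂ bE :=
    orthonormal_subtype (v := bE)
      (hb.comp (fun i => ((eqv.symm i) : ι)) (Subtype.val_injective.comp eqv.symm.injective))
  have huEon : Orthonormal ℂ uE := orthonormal_subtype (v := uE) huon
  set d := Module.finrank ℂ F with hd
  have hmd : m ≤ d := by
    simpa using hbEon.linearIndependent.fintype_card_le_finrank
  set sset : Set (Fin d) := {i | (i : ℕ) < m} with hsset
  have hrestr : ∀ (v : Fin m → F),
      sset.domRestrict (fun i : Fin d => if h : (i : ℕ) < m then v ⟨i, h⟩ else 0)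
        = v ∘ (fun i : ↥sset => (⟨(i : Fin d), i.2⟩ : Fin m)) := by
    intro v
    funext i
    simp only [Set.domRestrict_apply, Function.comp_apply]
    exact dif_pos i.2
  have hembinj : Function.Injective (fun i : ↥sset => (⟨(i : Fin d), i.2⟩ : Fin m)) := by
    rintro ⟨i, hi2⟩ ⟨j, hj2⟩ hij
    simpa [Subtype.ext_iff, Fin.ext_iff] using hij
  have hcard : Module.finrank ℂ F = Fintype.card (Fin d) := by simp [hd]
  obtain ⟨B1, hB1⟩ := Orthonormal.exists_orthonormalBasis_extension_of_card_eq hcard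
    (v := fun i : Fin d => if h : (i : ℕ) < m then bE ⟨i, h⟩ else 0) (s := sset)
    (by rw [hrestr]; exact hbEon.comp _ hembinj)
  obtain ⟨B2, hB2⟩ := Orthonormal.exists_orthonormalBasis_extension_of_card_eq hcard
    (v := fun i : Fin d => if h : (i : ℕ) < m then uE ⟨i, h⟩ else 0) (s := sset)
    (by rw [hrestr]; exact huEon.comp _ hembinj)
  set L : F ≃ₗᵢ[ℂ] F := B1.repr.trans B2.repr.symm with hL
  have hLmap : ∀ i : Fin m, L (bE i) = uE i := by
    intro i
    have hi : ((⟨(i : ℕ), lt_of_lt_of_le i.2 hmd⟩ : Fin d)) ∈ sset := i.2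
    have h1 : B1 ⟨(i : ℕ), lt_of_lt_of_le i.2 hmd⟩ = bE i := by
      rw [hB1 _ hi, dif_pos (i.2 : (i : ℕ) < m)]
    have h2 : B2 ⟨(i : ℕ), lt_of_lt_of_le i.2 hmd⟩ = uE i := by
      rw [hB2 _ hi, dif_pos (i.2 : (i : ℕ) < m)]
    rw [← h1, ← h2, hL]
    simp only [LinearIsometryEquiv.trans_apply, OrthonormalBasis.repr_self,
      OrthonormalBasis.repr_symm_single]
  refine ⟨t, hst, ((extIso F L : H ≃ₗᵢ[ℂ] H) : H →L[ℂ] H), extIso_mem_unitary F L, ?_, ?_⟩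
  · intro i hi
    rw [extIso_coe_apply]
    exact extIso_apply_of_mem_orthogonal F L (basis_mem_orthogonal hb hi)
  · intro j hj
    set i : Fin m := eqv ⟨j, hj⟩ with hi
    have hji : ((eqv.symm i) : ι) = j := by rw [hi, Equiv.symm_apply_apply]
    have h1 : ((extIso F L : H ≃ₗᵢ[ℂ] H) : H →L[ℂ] H) (b j) = u i := by
      rw [extIso_coe_apply, ← hji, extIso_apply_of_mem F L (hbmem i)]
      have : (⟨b ((eqv.symm i) : ι), hbmem i⟩ : F) = bE i := rfl
      rw [this, hLmap i]
    rw [h1, ← hji]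
    exact hux i

end Ext

end TwoInfty

/-- with `H_N = span{e_j : j} ⊕ span{f_1,…,f_N}`, the group
`U(2∞) = ⋃ₙ U(span{e_1,…,e_n,f_1,…,f_n})` is strongly dense in `𝒰 = ⋃_N U(H_N)`
(each unitary extended by the identity off the indicated subspace; an element of `𝒰`
is characterized by fixing `f_j` for all large `j`, and an element of `U(2∞)` by fixing
both `e_j` and `f_j` for all large `j`). -/
theorem unitary_two_infty_dense
    {H : Type*} [NormedAddCommGroup H] [InnerProductSpace ℂ H] [CompleteSpace H]
    (e f : ℕ → H)
    (horth : Orthonormal ℂ (Sum.elim e f : ℕ ⊕ ℕ → H))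
    (htotal : (Submodule.span ℂ (Set.range (Sum.elim e f : ℕ ⊕ ℕ → H))).topologicalClosure = ⊤)
    (W : H →L[ℂ] H) (hW : W ∈ unitary (H →L[ℂ] H))
    (hWfin : ∃ N : ℕ, ∀ j, N < j → W (f j) = f j)
    (k : ℕ) (ξ : Fin k → H) (ε : ℝ) (hε : 0 < ε) :
    ∃ W' ∈ unitary (H →L[ℂ] H),
      (∃ n : ℕ, ∀ j, n < j → W' (e j) = e j ∧ W' (f j) = f j) ∧
      ∀ i : Fin k, ‖W (ξ i) - W' (ξ i)‖ < ε := by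
  classical
  clear hWfin
  set b : ℕ ⊕ ℕ → H := Sum.elim e f with hbdef
  have hε3 : 0 < ε / 3 := by positivity
  choose si v hvmem hvclose using fun i : Fin k => TwoInfty.approx_total htotal (ξ i) hε3
  set s0 : Finset (ℕ ⊕ ℕ) := Finset.univ.biUnion si with hs0
  have hvmem0 : ∀ i, v i ∈ Submodule.span ℂ (b '' ↑s0) := by
    intro i
    refine Submodule.span_mono (Set.image_mono (f := b) ?_) (hvmem i)
    intro a ha
    exact Finset.mem_coe.2 (Finset.mem_biUnion.2 ⟨i, Finset.mem_univ _, ha⟩)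
  set m : ℕ := s0.card with hm
  set M : ℝ := 1 + ε + ∑ i, ‖ξ i‖ with hM
  have hMpos : 0 < M := by
    have : (0:ℝ) ≤ ∑ i, ‖ξ i‖ := Finset.sum_nonneg (fun i _ => norm_nonneg _)
    rw [hM]; linarith
  have hvM : ∀ i, ‖v i‖ ≤ M := by
    intro i
    have h1 : ‖v i‖ ≤ ‖ξ i‖ + ‖ξ i - v i‖ := by
      have := norm_sub_le (ξ i) (ξ i - v i)
      simpa [sub_sub_cancel] using this
    have h3 : ‖ξ i‖ ≤ ∑ j, ‖ξ j‖ :=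
      Finset.single_le_sum (f := fun j => ‖ξ j‖) (fun j _ => norm_nonneg _) (Finset.mem_univ i)
    have h4 := hvclose i
    rw [hM]
    nlinarith [norm_nonneg (ξ i - v i)]
  set δ : ℝ := ε / (3 * (m * M + 1)) with hδ
  have hδpos : 0 < δ := by
    have : (0:ℝ) ≤ (m:ℝ) * M := by positivity
    rw [hδ]; positivity
  obtain ⟨t, hst, W', hW'u, hW'fix, hW'close⟩ :=
    TwoInfty.unitary_approx_on_basis horth htotal W hW s0 hδpos
  refine ⟨W', hW'u, ?_, ?_⟩
  · -- support condition
    refine ⟨t.sup (Sum.elim id id), fun j hj => ?_⟩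
    constructor
    · have hnot : Sum.inl j ∉ t := by
        intro hmem
        have := Finset.le_sup (f := Sum.elim id id) hmem
        simp only [Sum.elim_inl, id_eq] at this
        omega
      exact hW'fix _ hnot
    · have hnot : Sum.inr j ∉ t := by
        intro hmem
        have := Finset.le_sup (f := Sum.elim id id) hmem
        simp only [Sum.elim_inr, id_eq] at this
        omega
      exact hW'fix _ hnot
  · intro i
    have hWiso : ∀ z : H, ‖W z‖ = ‖z‖ := fun z =>
      ContinuousLinearMap.norm_map_of_mem_unitary hW z
    have hW'iso : ∀ z : H, ‖W' z‖ = ‖z‖ := fun z =>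
      ContinuousLinearMap.norm_map_of_mem_unitary hW'u z
    have hsplit : W (ξ i) - W' (ξ i)
        = W (ξ i - v i) + (W (v i) - W' (v i)) + W' (v i - ξ i) := by
      rw [map_sub, map_sub]
      abel
    have hmid : ‖W (v i) - W' (v i)‖ ≤ m * M * δ := by
      have hrepr := TwoInfty.span_repr horth (hvmem0 i)
      have hWv : W (v i) - W' (v i)
          = ∑ j ∈ s0, (inner ℂ (b j) (v i) : ℂ) • (W (b j) - W' (b j)) := by
        conv_lhs => rw [hrepr]
        rw [map_sum, map_sum, ← Finset.sum_sub_distrib]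
        refine Finset.sum_congr rfl (fun j _ => ?_)
        rw [map_smul, map_smul, smul_sub]
      rw [hWv]
      calc ‖∑ j ∈ s0, (inner ℂ (b j) (v i) : ℂ) • (W (b j) - W' (b j))‖
          ≤ ∑ j ∈ s0, ‖(inner ℂ (b j) (v i) : ℂ) • (W (b j) - W' (b j))‖ := norm_sum_le _ _
        _ ≤ ∑ _j ∈ s0, M * δ := by
            refine Finset.sum_le_sum (fun j hj => ?_)
            rw [norm_smul]
            have h1 : ‖(inner ℂ (b j) (v i) : ℂ)‖ ≤ M := by
              have := norm_inner_le_norm (𝕜 := ℂ) (b j) (v i)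
              rw [horth.1 j, one_mul] at this
              exact this.trans (hvM i)
            have h2 : ‖W (b j) - W' (b j)‖ ≤ δ := (hW'close j hj).le
            have h3 : (0:ℝ) ≤ ‖(inner ℂ (b j) (v i) : ℂ)‖ := norm_nonneg _
            nlinarith [norm_nonneg (W (b j) - W' (b j)), hMpos.le]
        _ = m * (M * δ) := by rw [Finset.sum_const, nsmul_eq_mul, hm]
        _ = m * M * δ := by ring
    have hmid' : (m:ℝ) * M * δ < ε / 3 := by
      rw [hδ, ← mul_div_assoc,
        div_lt_div_iff₀ (by positivity) (by norm_num : (0:ℝ) < 3)]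
      have h0 : (0:ℝ) ≤ (m:ℝ) * M := by positivity
      nlinarith
    calc ‖W (ξ i) - W' (ξ i)‖
        ≤ ‖W (ξ i - v i)‖ + ‖W (v i) - W' (v i)‖ + ‖W' (v i - ξ i)‖ := by
          rw [hsplit]; exact norm_add₃_le
      _ < ε / 3 + ε / 3 + ε / 3 := by
          rw [hWiso, hW'iso]
          have h5 : ‖v i - ξ i‖ = ‖ξ i - v i‖ := norm_sub_rev _ _
          have h6 := hvclose i
          have h7 := hmid.trans_lt hmid'
          rw [h5]
          linarith
      _ = ε := by ring
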